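/- Let δ ∈ (0,1) and m ≥ 1. The Akhiezer polynomial A_{2m,δ}(x) = 𝔗ₘ((1+δ²−2x²)/(1−δ²)) satisfies |A_{2m,δ}(x)| ≤ 1 for every x ∈ [−1,1] with |x| ≥ δ, and A_{2m,δ}(0) = 𝔗ₘ((1+δ²)/(1−δ²)) > 1. Consequently M_{2m}(0, E(0,δ)) ≥ 𝔗ₘ((1+δ²)/(1−δ²)) > 1; in particular for δ = 1/2 one gets M_{2m}(0, E(0,1/2)) ≥ 𝔗ₘ(5/3) > 1 = 𝔗_{2m}((1/2 − 0)/(1 − 1/2)). -/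
import Mathlib


open MeasureTheory Set Filter Real

/-- `Mn n x₀ E`: sup of `|P(x₀)|` over real polynomials of degree at most `n`
bounded by 1 on `E`. -/
noncomputable def Mn (n : ℕ) (x₀ : ℝ) (E : Set ℝ) : ℝ :=
  sSup {y | ∃ P : Polynomial ℝ, P.natDegree ≤ n ∧ (∀ x ∈ E, |P.eval x| ≤ 1) ∧
    y = |P.eval x₀|}

/-- `Ln n δ x₀`: sup of `Mn n x₀ E` over closed subsets `E ⊆ [-1,1]` with
Lebesgue measure at least `2 - 2δ`. -/
noncomputable def Ln (n : ℕ) (δ : ℝ) (x₀ : ℝ) : ℝ :=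
  sSup {y | ∃ E : Set ℝ, IsClosed E ∧ E ⊆ Icc (-1 : ℝ) 1 ∧
    2 - 2 * δ ≤ (volume E).toReal ∧ y = Mn n x₀ E}

/-- The two-interval set `E(α,δ) = [-1,1] \ (α-δ, α+δ)`. -/
def Eset (α δ : ℝ) : Set ℝ := Icc (-1 : ℝ) 1 \ Ioo (α - δ) (α + δ)

/-- The critical point `c(α)` of the Green function of `ℂ̄ \ E(α,δ)` in the gap. -/
noncomputable def cpt (δ α : ℝ) : ℝ :=
  (∫ ξ in (α - δ)..(α + δ), ξ / Real.sqrt ((1 - ξ^2) * (ξ - (α - δ)) * ((α + δ) - ξ))) /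
  (∫ ξ in (α - δ)..(α + δ), 1 / Real.sqrt ((1 - ξ^2) * (ξ - (α - δ)) * ((α + δ) - ξ)))

/-- The Green function `G_{α,δ}(x)` of `ℂ̄ \ E(α,δ)` with pole at `∞`,
in the gap `(α-δ, α+δ)`. -/
noncomputable def Gtwo (δ α x : ℝ) : ℝ :=
  ∫ ξ in (α - δ)..x, (cpt δ α - ξ) / Real.sqrt ((1 - ξ^2) * (ξ - (α - δ)) * ((α + δ) - ξ))

/-- The Green function `G_δ(x)` of `ℂ̄ \ [-1+2δ, 1]` with pole at `∞`. -/
noncomputable def Gone (δ x : ℝ) : ℝ :=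
  if x ≤ -1 + 2 * δ then
    Real.log ((δ - x) / (1 - δ) + Real.sqrt (((δ - x) / (1 - δ))^2 - 1))
  else 0

/-- The upper envelope `Φ_δ(x)`; `sSup ∅ = 0` in `ℝ`. -/
noncomputable def Phi (δ x : ℝ) : ℝ :=
  max (Gone δ x)
    (sSup {y | ∃ α ∈ Ioc (δ - 1) (0 : ℝ), x ∈ Ioo (α - δ) (α + δ) ∧ y = Gtwo δ α x})

/-- `Cheb n y = ((y+√(y²−1))ⁿ + (y−√(y²−1))ⁿ)/2`, the Chebyshev polynomial of the
first kind for `y ≥ 1`. -/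
noncomputable def Cheb (n : ℕ) (y : ℝ) : ℝ :=
  ((y + Real.sqrt (y^2 - 1))^n + (y - Real.sqrt (y^2 - 1))^n) / 2


section AkhiezerAux

lemma chebT_natDegree_le : ∀ n : ℕ, (Polynomial.Chebyshev.T ℝ (n : ℤ)).natDegree ≤ n := by
  intro n
  induction n using Nat.strong_induction_on with
  | _ n ih =>
    match n with
    | 0 => simp [Polynomial.Chebyshev.T_zero]
    | 1 => simpa [Polynomial.Chebyshev.T_one] using Polynomial.natDegree_X_le
    | (k+2) =>
      have h1 := ih k (by omega)
      have h2 := ih (k+1) (by omega)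
      have e : ((k+2 : ℕ) : ℤ) = (k : ℤ) + 2 := by push_cast; ring
      have e1 : ((k:ℤ)+1) = ((k+1:ℕ):ℤ) := by push_cast; ring
      rw [e, Polynomial.Chebyshev.T_add_two]
      refine le_trans (Polynomial.natDegree_sub_le _ _) ?_
      have hX : (2 * Polynomial.X * Polynomial.Chebyshev.T ℝ ((k:ℤ)+1)).natDegree ≤ k + 2 := by
        refine le_trans (Polynomial.natDegree_mul_le) ?_
        have hx2 : (2 * Polynomial.X : Polynomial ℝ).natDegree ≤ 1 := by
          refine le_trans (Polynomial.natDegree_mul_le) ?_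
          simp
        rw [e1]
        omega
      simp only [max_le_iff]
      exact ⟨hX, by omega⟩

lemma chebT_eval_eq_cheb (y : ℝ) (hy : 1 ≤ y) :
    ∀ n : ℕ, (Polynomial.Chebyshev.T ℝ (n : ℤ)).eval y = Cheb n y := by
  have hs : Real.sqrt (y^2-1) ^ 2 = y^2 - 1 := Real.sq_sqrt (by nlinarith)
  intro n
  induction n using Nat.strong_induction_on with
  | _ n ih =>
    match n with
    | 0 => simp [Polynomial.Chebyshev.T_zero, Cheb]
    | 1 =>
      simp only [Polynomial.Chebyshev.T_one, Nat.cast_one, Polynomial.eval_X, Cheb, pow_one]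
      ring
    | (k+2) =>
      have h1 := ih k (by omega)
      have h2 := ih (k+1) (by omega)
      have e : ((k+2 : ℕ) : ℤ) = (k : ℤ) + 2 := by push_cast; ring
      have e1 : ((k:ℤ)+1) = ((k+1:ℕ):ℤ) := by push_cast; ring
      rw [e, Polynomial.Chebyshev.T_add_two]
      simp only [Polynomial.eval_sub, Polynomial.eval_mul, Polynomial.eval_ofNat,
        Polynomial.eval_X]
      rw [e1, h1, h2]
      simp only [Cheb]
      set s := Real.sqrt (y^2-1) with hsdef
      have hab : (y+s)*(y-s) = 1 := by nlinarith [hs]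
      have key : (y+s)^(k+2) + (y-s)^(k+2)
          = 2*y*((y+s)^(k+1)+(y-s)^(k+1)) - ((y+s)*(y-s))*((y+s)^k+(y-s)^k) := by ring
      rw [hab] at key
      linarith

lemma chebT_abs_le (n : ℕ) (z : ℝ) (hz : z ∈ Set.Icc (-1:ℝ) 1) :
    |(Polynomial.Chebyshev.T ℝ (n:ℤ)).eval z| ≤ 1 := by
  have h := Polynomial.Chebyshev.T_real_cos (Real.arccos z) (n:ℤ)
  rw [Real.cos_arccos hz.1 hz.2] at h
  rw [h]
  exact Real.abs_cos_le_one _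

lemma one_lt_cheb (m : ℕ) (hm : 1 ≤ m) (y : ℝ) (hy : 1 < y) : 1 < Cheb m y := by
  set s := Real.sqrt (y^2-1) with hsdef
  have hs2 : s^2 = y^2-1 := Real.sq_sqrt (by nlinarith)
  have hspos : 0 < s := Real.sqrt_pos.mpr (by nlinarith)
  have ha : 1 < y + s := by linarith
  have hab : (y+s)*(y-s) = 1 := by nlinarith
  have hbpos : 0 < y - s := by nlinarith
  have hA : 1 < (y+s)^m := one_lt_pow₀ ha (by omega)
  have hB : 0 < (y-s)^m := pow_pos hbpos m
  have hAB : (y+s)^m * (y-s)^m = 1 := by rw [← mul_pow, hab, one_pow]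
  have h2 : 2 < (y+s)^m + (y-s)^m := by nlinarith [sq_nonneg ((y+s)^m - 1)]
  simp only [Cheb]
  linarith

lemma mn_bddAbove (n : ℕ) (x₀ : ℝ) (E : Set ℝ) (v : ℕ → ℝ)
    (hv : ∀ i ∈ Finset.range (n+1), v i ∈ E)
    (hinj : Set.InjOn v (Finset.range (n+1))) :
    BddAbove {y | ∃ P : Polynomial ℝ, P.natDegree ≤ n ∧ (∀ x ∈ E, |P.eval x| ≤ 1) ∧
      y = |P.eval x₀|} := by
  refine ⟨∑ i ∈ Finset.range (n+1), |(Lagrange.basis (Finset.range (n+1)) v i).eval x₀|, ?_⟩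
  rintro y ⟨P, hdeg, hbnd, rfl⟩
  have hdlt : P.degree < (Finset.range (n+1)).card := by
    rw [Finset.card_range]
    exact lt_of_le_of_lt Polynomial.degree_le_natDegree
      (by exact_mod_cast Nat.lt_succ_of_le hdeg)
  have hP := Lagrange.eq_interpolate hinj hdlt
  have heval : P.eval x₀ = ∑ i ∈ Finset.range (n+1),
      P.eval (v i) * (Lagrange.basis (Finset.range (n+1)) v i).eval x₀ := by
    conv_lhs => rw [hP]
    simp [Lagrange.interpolate_apply, Polynomial.eval_finset_sum]
  rw [heval]
  refine le_trans (Finset.abs_sum_le_sum_abs _ _) (Finset.sum_le_sum fun i hi => ?_)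
  rw [abs_mul]
  exact mul_le_of_le_one_left (abs_nonneg _) (hbnd _ (hv i hi))

end AkhiezerAux

/-- the Akhiezer polynomial `A_{2m,δ}(x) = 𝔗ₘ((1+δ²−2x²)/(1−δ²))`
is bounded by 1 on `E(0,δ)` and exceeds 1 at `0`; consequently
`M_{2m}(0,E(0,δ)) ≥ 𝔗ₘ((1+δ²)/(1−δ²)) > 1`, while the Remez polynomial value at
`0` for `δ = 1/2` is just `1`. -/
theorem akhiezer_beats_remez_at_zero (δ : ℝ) (hδ : δ ∈ Ioo (0 : ℝ) 1)
    (m : ℕ) (hm : 1 ≤ m) :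
    (∀ x ∈ Icc (-1 : ℝ) 1, δ ≤ |x| →
      |(Polynomial.Chebyshev.T ℝ (m : ℤ)).eval ((1 + δ^2 - 2 * x^2) / (1 - δ^2))| ≤ 1) ∧
    (Polynomial.Chebyshev.T ℝ (m : ℤ)).eval ((1 + δ^2) / (1 - δ^2))
      = Cheb m ((1 + δ^2) / (1 - δ^2)) ∧
    1 < Cheb m ((1 + δ^2) / (1 - δ^2)) ∧
    Cheb m ((1 + δ^2) / (1 - δ^2)) ≤ Mn (2 * m) 0 (Eset 0 δ) ∧
    (δ = 1 / 2 →
      Cheb m (5 / 3) ≤ Mn (2 * m) 0 (Eset 0 (1 / 2)) ∧ 1 < Cheb m (5 / 3) ∧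
      Cheb (2 * m) ((1 / 2 - 0) / (1 - 1 / 2)) = 1) := by
  have hδ0 := hδ.1
  have hδ1 := hδ.2
  have hden : (0:ℝ) < 1 - δ^2 := by nlinarith
  have hy1 : 1 < (1 + δ^2) / (1 - δ^2) := by
    rw [lt_div_iff₀ hden]; nlinarith
  -- Part 1: bounded on E
  have part1 : ∀ x ∈ Icc (-1 : ℝ) 1, δ ≤ |x| →
      |(Polynomial.Chebyshev.T ℝ (m : ℤ)).eval ((1 + δ^2 - 2 * x^2) / (1 - δ^2))| ≤ 1 := by
    intro x hx hax
    obtain ⟨hxl, hxr⟩ := hx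
    refine chebT_abs_le m _ ⟨?_, ?_⟩
    · rw [le_div_iff₀ hden]
      nlinarith [mul_nonneg (by linarith : (0:ℝ) ≤ 1+x) (by linarith : (0:ℝ) ≤ 1-x)]
    · rw [div_le_one hden]
      have hx2 : δ^2 ≤ x^2 := by
        have := sq_abs x
        nlinarith [abs_nonneg x]
      nlinarith
  have part2 : (Polynomial.Chebyshev.T ℝ (m : ℤ)).eval ((1 + δ^2) / (1 - δ^2))
      = Cheb m ((1 + δ^2) / (1 - δ^2)) := chebT_eval_eq_cheb _ hy1.le m
  have part3 : 1 < Cheb m ((1 + δ^2) / (1 - δ^2)) := one_lt_cheb m hm _ hy1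
  -- the Akhiezer polynomial
  set q : Polynomial ℝ :=
    Polynomial.C ((1+δ^2)/(1-δ^2)) - Polynomial.C (2/(1-δ^2)) * Polynomial.X^2 with hq
  set P : Polynomial ℝ := (Polynomial.Chebyshev.T ℝ (m : ℤ)).comp q with hPdef
  have hqeval : ∀ x : ℝ, q.eval x = (1 + δ^2 - 2 * x^2) / (1 - δ^2) := by
    intro x
    simp only [hq, Polynomial.eval_sub, Polynomial.eval_mul, Polynomial.eval_C,
      Polynomial.eval_pow, Polynomial.eval_X]
    field_simp
  have hPeval : ∀ x : ℝ, P.eval x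
      = (Polynomial.Chebyshev.T ℝ (m : ℤ)).eval ((1 + δ^2 - 2 * x^2) / (1 - δ^2)) := by
    intro x
    rw [hPdef, Polynomial.eval_comp, hqeval]
  have hPdeg : P.natDegree ≤ 2 * m := by
    refine le_trans (Polynomial.natDegree_comp_le) ?_
    have hq2 : q.natDegree ≤ 2 := by
      refine le_trans (Polynomial.natDegree_sub_le _ _) ?_
      simp only [max_le_iff]
      constructor
      · simp
      · refine le_trans (Polynomial.natDegree_mul_le) ?_
        simp [Polynomial.natDegree_X_pow]
    have := chebT_natDegree_le m
    calc (Polynomial.Chebyshev.T ℝ (m : ℤ)).natDegree * q.natDegree ≤ m * 2 :=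
          Nat.mul_le_mul this hq2
      _ = 2 * m := by ring
  have hPbnd : ∀ x ∈ Eset 0 δ, |P.eval x| ≤ 1 := by
    rintro x ⟨hx1, hx2⟩
    rw [hPeval]
    refine part1 x hx1 ?_
    by_contra hlt
    push_neg at hlt
    exact hx2 ⟨by cases abs_lt.mp hlt; linarith, by cases abs_lt.mp hlt; linarith⟩
  have hP0 : P.eval 0 = Cheb m ((1 + δ^2) / (1 - δ^2)) := by
    rw [hPeval, show (1 + δ^2 - 2*(0:ℝ)^2)/(1-δ^2) = (1+δ^2)/(1-δ^2) by norm_num, part2]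
  -- boundedness via Lagrange nodes
  have hbdd : BddAbove {y | ∃ Q : Polynomial ℝ, Q.natDegree ≤ 2*m ∧
      (∀ x ∈ Eset 0 δ, |Q.eval x| ≤ 1) ∧ y = |Q.eval 0|} := by
    refine mn_bddAbove (2*m) 0 (Eset 0 δ) (fun i => δ + (1-δ) * i / (2*m)) ?_ ?_
    · intro i hi
      rw [Finset.mem_range] at hi
      have hi' : (i:ℝ) ≤ 2*m := by exact_mod_cast Nat.lt_succ_iff.mp hi
      have hm' : (0:ℝ) < 2*m := by
        have : (1:ℝ) ≤ m := by exact_mod_cast hm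
        linarith
      have hvi1 : δ + (1-δ) * i / (2*m) ≤ 1 := by
        have h1 : (1-δ) * i / (2*m) ≤ 1-δ := by
          rw [div_le_iff₀ hm']
          nlinarith [mul_nonneg (by linarith : (0:ℝ) ≤ 1-δ)
            (by linarith : (0:ℝ) ≤ 2*(m:ℝ) - i)]
        linarith
      have hvi0 : δ ≤ δ + (1-δ) * i / (2*m) := by
        have : 0 ≤ (1-δ) * i / (2*m) :=
          div_nonneg (mul_nonneg (by linarith) (Nat.cast_nonneg i)) hm'.le
        linarith
      constructor
      · exact ⟨by linarith, hvi1⟩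
      · rintro ⟨-, h2⟩
        simp only [zero_add] at h2
        linarith
    · intro a ha b hb hab
      simp only [Finset.coe_range, Set.mem_Iio] at ha hb
      have hm' : (0:ℝ) < 2*m := by
        have : (1:ℝ) ≤ m := by exact_mod_cast hm
        linarith
      have hne1 : (1-δ) ≠ 0 := by linarith
      have : (1-δ) * a / (2*m) = (1-δ) * b / (2*m) := by linarith
      rw [div_eq_div_iff (ne_of_gt hm') (ne_of_gt hm')] at this
      have h2 := mul_right_cancel₀ (ne_of_gt hm') this
      have h3 := mul_left_cancel₀ hne1 h2
      exact_mod_cast h3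
  have part4 : Cheb m ((1 + δ^2) / (1 - δ^2)) ≤ Mn (2 * m) 0 (Eset 0 δ) := by
    have hmem : |P.eval 0| ∈ {y | ∃ Q : Polynomial ℝ, Q.natDegree ≤ 2*m ∧
        (∀ x ∈ Eset 0 δ, |Q.eval x| ≤ 1) ∧ y = |Q.eval 0|} :=
      ⟨P, hPdeg, hPbnd, rfl⟩
    have := le_csSup hbdd hmem
    rw [hP0, abs_of_pos (by linarith)] at this
    exact this
  refine ⟨part1, part2, part3, part4, ?_⟩
  intro hhalf
  subst hhalf
  have e53 : (1 + (1/2:ℝ)^2) / (1 - (1/2:ℝ)^2) = 5/3 := by norm_num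
  rw [e53] at part3 part4
  refine ⟨part4, part3, ?_⟩
  have e1 : ((1/2:ℝ) - 0) / (1 - 1/2) = 1 := by norm_num
  rw [e1]
  simp [Cheb]
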